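/- Let $g(x) = -\log(1 + e^{-x})$, $f(x) = (e^x+1)^{-2}$, $\sigma \equiv 1$, $b \equiv \mu$. Then the function $G(x) = \frac{1}{f(x)}(\tfrac{1}{2} g''(x) + \mu g'(x))$ satisfies, for all $z < 0$, $G(g^{-1}(z)) = \mu + \left(\mu - \tfrac{1}{2}\right)\frac{e^z}{1 - e^z}$. -/

import Mathlib

lemma dg1 : deriv (fun x => -Real.log (1 + Real.exp (-x))) = fun x => 1/(Real.exp x + 1) := by
  funext x
  have hpos : (0:ℝ) < 1 + Real.exp (-x) := by positivity
  have h1 : HasDerivAt (fun x : ℝ => 1 + Real.exp (-x)) (-Real.exp (-x)) x := by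
    have := ((Real.hasDerivAt_exp (-x)).comp x (hasDerivAt_neg x)).const_add 1
    simpa using this
  have h2 : HasDerivAt (fun x => -Real.log (1 + Real.exp (-x)))
      (-(-Real.exp (-x) / (1 + Real.exp (-x)))) x := (h1.log (ne_of_gt hpos)).neg
  rw [h2.deriv]
  have he : Real.exp x ≠ 0 := (Real.exp_pos x).ne'
  rw [Real.exp_neg]
  field_simp

lemma dg2 (x : ℝ) : deriv (fun x => 1/(Real.exp x + 1)) x
    = -Real.exp x / (Real.exp x + 1)^2 := by
  have hne : Real.exp x + 1 ≠ 0 := by positivity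
  have h1 : HasDerivAt (fun x : ℝ => Real.exp x + 1) (Real.exp x) x := by
    simpa using (Real.hasDerivAt_exp x).add_const 1
  have h2 : HasDerivAt (fun x => (Real.exp x + 1)⁻¹)
      (-Real.exp x / (Real.exp x + 1)^2) x := by
    simpa [div_eq_mul_inv] using h1.fun_inv hne
  simpa [one_div] using h2.deriv

/-- With `g x = -log (1 + exp (-x))`, `f x = (exp x + 1)⁻²`, `σ ≡ 1`, `b ≡ μ`,
the drift `G x = (1/f x) * ((1/2) g'' x + μ g' x)` satisfies
`G (g⁻¹ z) = μ + (μ - 1/2) * exp z / (1 - exp z)` for `z < 0`. -/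
theorem stmt_6 (μ : ℝ) (g ginv G : ℝ → ℝ)
    (hg : g = fun x => -Real.log (1 + Real.exp (-x)))
    (hginv : ∀ z < (0:ℝ), g (ginv z) = z)
    (hginv' : ∀ x : ℝ, ginv (g x) = x)
    (hG : G = fun x => (1 / (1 / (Real.exp x + 1) ^ 2)) *
      ((1/2) * deriv (deriv g) x + μ * deriv g x)) :
    ∀ z < (0:ℝ),
      G (ginv z) = μ + (μ - 1/2) * (Real.exp z / (1 - Real.exp z)) := by
  intro z hz
  set x := ginv z with hxdef
  have hgx : g x = z := hginv z hz
  have hpos : (0:ℝ) < 1 + Real.exp (-x) := by positivity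
  have hlog : Real.log (1 + Real.exp (-x)) = -z := by
    rw [hg] at hgx; simp only at hgx; linarith
  have hexp : 1 + Real.exp (-x) = Real.exp (-z) := by
    rw [← hlog, Real.exp_log hpos]
  have hez1 : Real.exp z < 1 := Real.exp_lt_one_iff.mpr hz
  have hne1 : (1:ℝ) - Real.exp z ≠ 0 := by linarith
  have hez : Real.exp z ≠ 0 := (Real.exp_pos z).ne'
  have hx : Real.exp x = Real.exp z / (1 - Real.exp z) := by
    have hx' : Real.exp (-x) = Real.exp (-z) - 1 := by linarith
    rw [Real.exp_neg, Real.exp_neg] at hx'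
    have hex : Real.exp x ≠ 0 := (Real.exp_pos x).ne'
    field_simp at hx' ⊢
    linarith [hx']
  have hne : Real.exp x + 1 ≠ 0 := by positivity
  rw [hG]
  simp only
  rw [hg, dg1, dg2]
  simp only
  rw [hx]
  field_simp
  ring
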